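/- Suppose under H₁ a random variable N is distributed as N((z*−μ)/n, (n−1)σ²/n²) and the test statistic S(N) = c₀ + c₁·N + c₂·N² is as in the Type I error setting. Let m* = (z*−μ)²/σ², a = √(m*·n), and for γ ≤ γ_max = (1/2)(m* − log((n−1)/n)) let b(γ) = √((n−1)(m* − log(1−1/n) − 2γ)). Then P(S(N) < γ) = Φ(a·√((n−1)/n) − b(γ)·√(n/(n−1))) + Φ(−a·√((n−1)/n) − b(γ)·√(n/(n−1))). -/

import Mathlib

open Real ProbabilityTheory
set_option maxHeartbeats 1000000

/-- Standard normal CDF. -/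
noncomputable def stdNormalCDF (x : ℝ) : ℝ :=
  ((gaussianReal 0 1) (Set.Iic x)).toReal

section helpers
open MeasureTheory

lemma gauss_singleton {m : ℝ} {v : NNReal} (hv : v ≠ 0) (a : ℝ) :
    gaussianReal m v {a} = 0 :=
  gaussianReal_absolutelyContinuous m hv (measure_singleton a)

lemma gauss_map (m s : ℝ) (hs : 0 < s) :
    gaussianReal m ((s^2).toNNReal) = (gaussianReal 0 1).map (fun y => s * y + m) := by
  have h1 : (gaussianReal 0 1).map (fun y => s * y) = gaussianReal 0 ((s^2).toNNReal) := by
    have := gaussianReal_map_const_mul (μ := 0) (v := 1) s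
    simp only [mul_zero] at this
    convert this using 2
    ext
    simp [Real.coe_toNNReal _ (sq_nonneg s)]
  have h2 : (fun y : ℝ => s * y + m) = (fun y => y + m) ∘ (fun y => s * y) := rfl
  rw [h2, ← Measure.map_map (measurable_add_const m) (measurable_const_mul s), h1,
    gaussianReal_map_add_const, zero_add]

lemma gauss_Iic (m s : ℝ) (hs : 0 < s) (x : ℝ) :
    ((gaussianReal m ((s^2).toNNReal)) (Set.Iic x)).toReal = stdNormalCDF ((x - m)/s) := by
  rw [gauss_map m s hs, Measure.map_apply (by fun_prop) measurableSet_Iic]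
  congr 2
  ext y
  simp only [Set.mem_preimage, Set.mem_Iic]
  rw [le_div_iff₀ hs]
  constructor <;> intro h <;> nlinarith

lemma stdNormal_symm (x : ℝ) : stdNormalCDF (-x) + stdNormalCDF x = 1 := by
  have hmap : (gaussianReal 0 1).map (fun y : ℝ => -1 * y) = gaussianReal 0 1 := by
    have := gaussianReal_map_const_mul (μ := 0) (v := 1) (-1)
    simp only [mul_zero] at this
    convert this using 2
    ext; norm_num
  have h1 : (gaussianReal 0 1) (Set.Iic (-x)) = (gaussianReal 0 1) (Set.Ici x) := by
    conv_lhs => rw [← hmap]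
    rw [Measure.map_apply (by fun_prop) measurableSet_Iic]
    congr 1
    ext y
    simp only [Set.mem_preimage, Set.mem_Iic, Set.mem_Ici]
    constructor <;> intro h <;> linarith
  have h2 : (gaussianReal 0 1) (Set.Ici x) = (gaussianReal 0 1) (Set.Ioi x) := by
    refine le_antisymm ?_ (measure_mono Set.Ioi_subset_Ici_self)
    calc (gaussianReal 0 1) (Set.Ici x) = (gaussianReal 0 1) (Set.Ioi x ∪ {x}) := by
          rw [Set.Ioi_union_left]
      _ ≤ (gaussianReal 0 1) (Set.Ioi x) + (gaussianReal 0 1) {x} := measure_union_le _ _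
      _ = (gaussianReal 0 1) (Set.Ioi x) := by rw [gauss_singleton one_ne_zero, add_zero]
  have h3 : (gaussianReal 0 1) (Set.Iic x) + (gaussianReal 0 1) (Set.Ioi x) = 1 := by
    rw [← measure_union (Set.Iic_disjoint_Ioi le_rfl) measurableSet_Ioi,
      Set.Iic_union_Ioi, measure_univ]
  unfold stdNormalCDF
  rw [h1, h2, ← ENNReal.toReal_add (measure_ne_top _ _) (measure_ne_top _ _), add_comm,
    h3, ENNReal.toReal_one]

lemma gauss_Iio (m s : ℝ) (hs : 0 < s) (x : ℝ) :
    ((gaussianReal m ((s^2).toNNReal)) (Set.Iio x)).toReal = stdNormalCDF ((x - m)/s) := by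
  have hv : ((s^2).toNNReal) ≠ 0 := by
    simp only [ne_eq, Real.toNNReal_eq_zero, not_le]
    positivity
  have : (gaussianReal m ((s^2).toNNReal)) (Set.Iio x)
      = (gaussianReal m ((s^2).toNNReal)) (Set.Iic x) := by
    refine le_antisymm (measure_mono Set.Iio_subset_Iic_self) ?_
    calc (gaussianReal m ((s^2).toNNReal)) (Set.Iic x)
        = (gaussianReal m ((s^2).toNNReal)) (Set.Iio x ∪ {x}) := by rw [Set.Iio_union_right]
      _ ≤ _ := measure_union_le _ _
      _ = (gaussianReal m ((s^2).toNNReal)) (Set.Iio x) := by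
          rw [gauss_singleton hv, add_zero]
  rw [this, gauss_Iic m s hs]

lemma gauss_Ioi (m s : ℝ) (hs : 0 < s) (x : ℝ) :
    ((gaussianReal m ((s^2).toNNReal)) (Set.Ioi x)).toReal = stdNormalCDF (-((x - m)/s)) := by
  have hcompl := measure_compl (μ := gaussianReal m ((s^2).toNNReal))
    (measurableSet_Iic (a := x)) (measure_ne_top _ _)
  rw [Set.compl_Iic, measure_univ] at hcompl
  rw [hcompl, ENNReal.toReal_sub_of_le prob_le_one ENNReal.one_ne_top, ENNReal.toReal_one,
    gauss_Iic m s hs]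
  have := stdNormal_symm ((x - m)/s)
  linarith

end helpers

/-- Type II error of the sequential membership inference test (Lemma 3.5). -/
theorem semi_type_two_error
    (n : ℕ) (hn : 2 ≤ n) (σ μ zstar : ℝ) (hσ : 0 < σ) (hz : zstar ≠ μ)
    (c₀ c₁ c₂ mstar a γmax : ℝ)
    (hc₂ : c₂ = -(n : ℝ) / (2 * ((n : ℝ) - 1) * σ ^ 2))
    (hc₁ : c₁ = (zstar - μ) * n / (((n : ℝ) - 1) * σ ^ 2))
    (hc₀ : c₀ = -(1 / 2) * Real.log (((n : ℝ) - 1) / n)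
        - (zstar - μ) ^ 2 / (2 * ((n : ℝ) - 1) * σ ^ 2))
    (hm : mstar = (zstar - μ) ^ 2 / σ ^ 2)
    (ha : a = Real.sqrt (mstar * n))
    (hγmax : γmax = (1 / 2) * (mstar - Real.log (((n : ℝ) - 1) / n)))
    (S : ℝ → ℝ) (hS : ∀ x, S x = c₀ + c₁ * x + c₂ * x ^ 2)
    (b : ℝ → ℝ)
    (hb : ∀ γ, b γ = Real.sqrt (((n : ℝ) - 1) * (mstar - Real.log (1 - 1 / n) - 2 * γ)))
    (P : MeasureTheory.Measure ℝ)
    (hP : P = gaussianReal ((zstar - μ) / n) ((((n : ℝ) - 1) * σ ^ 2 / (n : ℝ) ^ 2).toNNReal))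
    (γ : ℝ) (hγ : γ ≤ γmax) :
    (P {x | S x < γ}).toReal
      = stdNormalCDF (a * Real.sqrt (((n : ℝ) - 1) / n)
            - b γ * Real.sqrt ((n : ℝ) / ((n : ℝ) - 1)))
        + stdNormalCDF (-a * Real.sqrt (((n : ℝ) - 1) / n)
            - b γ * Real.sqrt ((n : ℝ) / ((n : ℝ) - 1))) := by
  have hn2 : (2 : ℝ) ≤ (n : ℝ) := by exact_mod_cast hn
  set nR : ℝ := (n : ℝ) with hnR
  have hn0 : 0 < nR := by linarith
  have hn1 : 0 < nR - 1 := by linarith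
  set d : ℝ := zstar - μ with hdd
  have hd : d ≠ 0 := sub_ne_zero.mpr hz
  set rn : ℝ := Real.sqrt nR with hrn
  set rn1 : ℝ := Real.sqrt (nR - 1) with hrn1
  have hrn0 : 0 < rn := Real.sqrt_pos.mpr hn0
  have hrn10 : 0 < rn1 := Real.sqrt_pos.mpr hn1
  have hrnsq : rn ^ 2 = nR := Real.sq_sqrt hn0.le
  have hrn1sq : rn1 ^ 2 = nR - 1 := Real.sq_sqrt hn1.le
  set s : ℝ := σ * rn1 / nR with hss
  have hs : 0 < s := by positivity
  -- variance rewriting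
  have hvar : ((nR - 1) * σ ^ 2 / nR ^ 2) = s ^ 2 := by
    rw [hss]; field_simp; nlinarith [hrn1sq]
  have hPs : P = gaussianReal (d / nR) ((s ^ 2).toNNReal) := by
    rw [hP, ← hvar]
  -- E ≥ 0
  have hlog : Real.log (1 - 1/nR) = Real.log ((nR - 1)/nR) := by
    congr 1; field_simp
  set E : ℝ := mstar - Real.log ((nR - 1)/nR) - 2 * γ with hEE
  have hE : 0 ≤ E := by rw [hEE]; rw [hγmax] at hγ; linarith
  have hbγ : b γ = Real.sqrt ((nR - 1) * E) := by rw [hb γ, hlog, hEE]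
  have hb0 : 0 ≤ b γ := by rw [hbγ]; exact Real.sqrt_nonneg _
  have hbsq : (b γ) ^ 2 = (nR - 1) * E := by
    rw [hbγ, Real.sq_sqrt (mul_nonneg hn1.le hE)]
  set t : ℝ := σ * b γ / rn with htt
  have ht0 : 0 ≤ t := by positivity
  have htsq : t ^ 2 = σ ^ 2 * ((nR - 1) * (d ^ 2 / σ ^ 2 - Real.log ((nR - 1)/nR) - 2 * γ)) / nR := by
    rw [htt, div_pow, mul_pow, hbsq, hrnsq, hEE, hm]
  -- quadratic identity
  have key : ∀ x : ℝ, S x < γ ↔ t ^ 2 < (x - d) ^ 2 := by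
    intro x
    have hid : S x - γ = (nR / (2 * ((nR - 1) * σ ^ 2))) * (t ^ 2 - (x - d) ^ 2) := by
      rw [hS x, hc₀, hc₁, hc₂, htsq]
      have hσ' : σ ≠ 0 := ne_of_gt hσ
      have hn1' : nR - 1 ≠ 0 := ne_of_gt hn1
      have hn0' : nR ≠ 0 := ne_of_gt hn0
      field_simp
      ring
    have hcoef : 0 < nR / (2 * ((nR - 1) * σ ^ 2)) := by positivity
    rw [← sub_neg (a := S x), hid]
    constructor
    · intro h
      by_contra hcon
      push_neg at hcon
      nlinarith [mul_nonneg hcoef.le (sub_nonneg.2 hcon)]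
    · intro h
      exact mul_neg_of_pos_of_neg hcoef (by linarith)
  have habs : ∀ x : ℝ, t ^ 2 < (x - d) ^ 2 ↔ x < d - t ∨ d + t < x := by
    intro x
    constructor
    · intro h
      rcases lt_or_ge x d with hx | hx
      · left; nlinarith
      · right; nlinarith
    · rintro (h | h) <;> nlinarith
  have hset : {x | S x < γ} = Set.Iio (d - t) ∪ Set.Ioi (d + t) := by
    ext x
    simp only [Set.mem_setOf_eq, Set.mem_union, Set.mem_Iio, Set.mem_Ioi]
    rw [key x, habs x]
  have hdisj : Disjoint (Set.Iio (d - t)) (Set.Ioi (d + t)) := by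
    rw [Set.disjoint_left]
    intro x hx hx'
    simp only [Set.mem_Iio] at hx
    simp only [Set.mem_Ioi] at hx'
    linarith
  rw [hset, hPs, MeasureTheory.measure_union hdisj measurableSet_Ioi,
    ENNReal.toReal_add (MeasureTheory.measure_ne_top _ _) (MeasureTheory.measure_ne_top _ _),
    gauss_Iio _ s hs, gauss_Ioi _ s hs]
  -- now pure real arithmetic
  have hB : b γ * Real.sqrt (nR / (nR - 1)) = b γ * (rn / rn1) := by
    rw [Real.sqrt_div hn0.le, ← hrn, ← hrn1]
  have hA : a * Real.sqrt ((nR - 1) / nR) = |d| * rn1 / σ := by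
    rw [ha, hm, Real.sqrt_div hn1.le, ← hrn, ← hrn1]
    rw [Real.sqrt_mul (by positivity), Real.sqrt_div (sq_nonneg d), Real.sqrt_sq_eq_abs,
      Real.sqrt_sq hσ.le, ← hrn]
    field_simp
  have h1 : (d - t - d / nR) / s = d * rn1 / σ - b γ * (rn / rn1) := by
    rw [htt, hss]
    have hσ' : σ ≠ 0 := ne_of_gt hσ
    have hrn0' : rn ≠ 0 := ne_of_gt hrn0
    have hrn10' : rn1 ≠ 0 := ne_of_gt hrn10
    have hn0' : nR ≠ 0 := ne_of_gt hn0
    have hrn1sq' : rn1 ^ 2 = rn ^ 2 - 1 := by rw [hrn1sq, hrnsq]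
    rw [← hrnsq]
    field_simp
    linear_combination (-d) * hrn1sq'
  have h2 : -((d + t - d / nR) / s) = -(d * rn1 / σ) - b γ * (rn / rn1) := by
    rw [htt, hss]
    have hσ' : σ ≠ 0 := ne_of_gt hσ
    have hrn0' : rn ≠ 0 := ne_of_gt hrn0
    have hrn10' : rn1 ≠ 0 := ne_of_gt hrn10
    have hn0' : nR ≠ 0 := ne_of_gt hn0
    have hrn1sq' : rn1 ^ 2 = rn ^ 2 - 1 := by rw [hrn1sq, hrnsq]
    rw [← hrnsq]
    field_simp
    linear_combination d * hrn1sq'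
  rw [h1, h2, hB, neg_mul, hA]
  rcases hd.lt_or_gt with hdneg | hdpos
  · rw [abs_of_neg hdneg, add_comm]
    congr 2 <;> ring
  · rw [abs_of_pos hdpos]
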